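/- Let s < 0. For each integer m ≥ 2 let u₀^{(m)}(x) = m^{−s} ( e^{−imx} + e^{−i(m−1)x} + e^{i(m+1)x} ) and let u₃^{(m)}(·,t) = ∫₀^t e^{i(t−τ)𝓛} 𝒩( e^{iτ𝓛} u₀^{(m)} ) dτ be the third Picard iterate of the Duhamel map for the 1D periodic Dysthe equation. Then there exist constants C₀, c > 0 (depending only on s) such that ‖u₀^{(m)}‖_{H^s(T)} ≤ C₀ for all m, while sup_{t∈[0,1]} ‖u₃^{(m)}(·,t)‖_{H^s(T)} ≥ c·m^{−2s} for all sufficiently large m. In particular, since m^{−2s} → ∞ as m → ∞, there is no constant C with sup_{t∈[0,1]} ‖u₃(·,t)‖_{H^s(T)} ≤ C‖u₀‖_{H^s(T)} for all trigonometric-polynomial data u₀; the map from data to the third Picard iterate is unbounded, so the 1D periodic Dysthe equation is ill-posed in H^s(T) for s < 0. -/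

import Mathlib

open scoped BigOperators

noncomputable section

/-- Dispersion relation of the linearized 1D periodic Dysthe equation. -/
def P (n : ℤ) : ℤ := n ^ 3 - 2 * n ^ 2 + 8 * n

/-- A trigonometric polynomial on `T = [0,2π]`, given by its finitely supported
family of spatial Fourier coefficients `f̂(n)`. -/
abbrev TrigPoly1 := ℤ →₀ ℂ

/-- Product of trigonometric polynomials: convolution of the coefficients, which
corresponds to the pointwise product of the realized functions. -/
def cmul (f g : TrigPoly1) : TrigPoly1 :=
  f.sum fun a fa => g.sum fun b gb => Finsupp.single (a + b) (fa * gb)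

/-- Complex conjugation at the level of Fourier coefficients:
`(conj f)̂(n) = conj (f̂(-n))`. -/
def conjC (f : TrigPoly1) : TrigPoly1 :=
  Finsupp.equivMapDomain (Equiv.neg ℤ) (Finsupp.mapRange (starRingEnd ℂ) (map_zero _) f)

/-- Spatial derivative `∂ₓ`: multiplies `f̂(n)` by `i n`. -/
def dx (f : TrigPoly1) : TrigPoly1 :=
  Finsupp.onFinset f.support (fun n => Complex.I * (n : ℂ) * f n)
    (fun n h => Finsupp.mem_support_iff.2 fun h0 => h (by simp [h0]))

/-- Fourier multiplier `|∂ₓ|`: multiplies `f̂(n)` by `|n|`. -/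
def absDx (f : TrigPoly1) : TrigPoly1 :=
  Finsupp.onFinset f.support (fun n => ((|n| : ℤ) : ℂ) * f n)
    (fun n h => Finsupp.mem_support_iff.2 fun h0 => h (by simp [h0]))

/-- Linear propagator `e^{it𝓛}`: multiplies `f̂(n)` by `e^{itP(n)}`. -/
def propL (t : ℝ) (f : TrigPoly1) : TrigPoly1 :=
  Finsupp.onFinset f.support (fun n => Complex.exp (Complex.I * (t : ℂ) * (P n : ℂ)) * f n)
    (fun n h => Finsupp.mem_support_iff.2 fun h0 => h (by simp [h0]))

/-- The Dysthe nonlinearity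
`𝒩(u) = −(i/2)|u|²u − (3/2)|u|²∂ₓu − (1/4)u²∂ₓ(conj u) + (i/2) u|∂ₓ|(|u|²)`,
where `|u|² = u · conj u`. -/
def Ncal (u : TrigPoly1) : TrigPoly1 :=
  (-(Complex.I / 2)) • cmul (cmul u (conjC u)) u
    - ((3 : ℂ) / 2) • cmul (cmul u (conjC u)) (dx u)
    - ((1 : ℂ) / 4) • cmul (cmul u u) (dx (conjC u))
    + (Complex.I / 2) • cmul u (absDx (cmul u (conjC u)))

/-- Fourier coefficients of the third Picard iterate
`u₃(·,t) = ∫₀ᵗ e^{i(t−τ)𝓛} 𝒩(e^{iτ𝓛} u₀) dτ` of the Duhamel map. -/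
def u3 (u₀ : TrigPoly1) (t : ℝ) (n : ℤ) : ℂ :=
  ∫ τ in (0:ℝ)..t, Complex.exp (Complex.I * ((t - τ : ℝ) : ℂ) * (P n : ℂ)) *
    (Ncal (propL τ u₀)) n

/-- Sobolev `H^s(T)` norm of a function given by its Fourier coefficients. -/
def HsNorm (s : ℝ) (g : ℤ → ℂ) : ℝ :=
  (∑' n : ℤ, (1 + |(n : ℝ)|) ^ (2 * s) * ‖g n‖ ^ 2) ^ ((1:ℝ) / 2)

/-- Initial data `u₀^{(m)}(x) = m^{−s} (e^{−imx} + e^{−i(m−1)x} + e^{i(m+1)x})`. -/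
def u0m (s : ℝ) (m : ℕ) : TrigPoly1 :=
  (((m : ℝ) ^ (-s) : ℝ) : ℂ) •
    (Finsupp.single (-(m : ℤ)) 1 + Finsupp.single (-(m : ℤ) + 1) 1 +
      Finsupp.single ((m : ℤ) + 1) 1)

open Complex Finsupp

lemma propL_apply (t : ℝ) (f : TrigPoly1) (n : ℤ) :
    propL t f n = Complex.exp (Complex.I * (t : ℂ) * (P n : ℂ)) * f n := rfl

lemma dx_apply (f : TrigPoly1) (n : ℤ) : dx f n = Complex.I * (n : ℂ) * f n := rfl

lemma absDx_apply (f : TrigPoly1) (n : ℤ) : absDx f n = ((|n| : ℤ) : ℂ) * f n := rfl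

lemma conjC_apply (f : TrigPoly1) (n : ℤ) :
    conjC f n = (starRingEnd ℂ) (f (-n)) := by
  rfl

lemma single_apply' (a : ℤ) (x : ℂ) (n : ℤ) :
    (Finsupp.single a x : TrigPoly1) n = if a = n then x else 0 := Finsupp.single_apply

lemma propL_single (t : ℝ) (a : ℤ) (x : ℂ) :
    propL t (Finsupp.single a x) = Finsupp.single a (Complex.exp (Complex.I * (t:ℂ) * (P a : ℂ)) * x) := by
  ext n; by_cases h : a = n
  · subst h; simp only [propL_apply, single_apply', if_pos rfl, if_true]
  · simp only [propL_apply, single_apply', if_neg h, mul_zero]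

lemma dx_single (a : ℤ) (x : ℂ) :
    dx (Finsupp.single a x) = Finsupp.single a (Complex.I * (a : ℂ) * x) := by
  ext n; by_cases h : a = n
  · subst h; simp only [dx_apply, single_apply', if_pos rfl, if_true]
  · simp only [dx_apply, single_apply', if_neg h, mul_zero]

lemma absDx_single (a : ℤ) (x : ℂ) :
    absDx (Finsupp.single a x) = Finsupp.single a (((|a| : ℤ) : ℂ) * x) := by
  ext n; by_cases h : a = n
  · subst h; simp only [absDx_apply, single_apply', if_pos rfl, if_true]
  · simp only [absDx_apply, single_apply', if_neg h, mul_zero]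

lemma conjC_single (a : ℤ) (x : ℂ) :
    conjC (Finsupp.single a x) = Finsupp.single (-a) ((starRingEnd ℂ) x) := by
  ext n; by_cases h : -a = n
  · have : a = -n := by omega
    subst this; simp only [conjC_apply, single_apply', if_pos rfl, neg_neg, if_true]
  · have h' : ¬ (a = -n) := fun hh => h (by omega)
    simp only [conjC_apply, single_apply', if_neg h, if_neg h', map_zero]

lemma propL_add (t : ℝ) (f g : TrigPoly1) : propL t (f + g) = propL t f + propL t g := by
  ext n; simp only [propL_apply, Finsupp.add_apply, mul_add]

lemma dx_add (f g : TrigPoly1) : dx (f + g) = dx f + dx g := by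
  ext n; simp only [dx_apply, Finsupp.add_apply, mul_add]

lemma absDx_add (f g : TrigPoly1) : absDx (f + g) = absDx f + absDx g := by
  ext n; simp only [absDx_apply, Finsupp.add_apply, mul_add]

lemma conjC_add (f g : TrigPoly1) : conjC (f + g) = conjC f + conjC g := by
  ext n; simp only [conjC_apply, Finsupp.add_apply, map_add]

lemma cmul_single_single (a b : ℤ) (x y : ℂ) :
    cmul (Finsupp.single a x) (Finsupp.single b y) = Finsupp.single (a + b) (x * y) := by
  rw [cmul, Finsupp.sum_single_index, Finsupp.sum_single_index]
  all_goals
    simp only [mul_zero, zero_mul, Finsupp.single_zero, Finsupp.sum_fun_zero, Finsupp.sum_single_index]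

lemma cmul_add_left (f g h : TrigPoly1) : cmul (f + g) h = cmul f h + cmul g h := by
  rw [cmul, cmul, cmul, Finsupp.sum_add_index]
  · intro a _
    simp only [zero_mul, Finsupp.single_zero, Finsupp.sum_fun_zero]
  · intro a _ x y
    rw [← Finsupp.sum_add]
    apply Finsupp.sum_congr
    intro b _
    rw [add_mul, Finsupp.single_add]

lemma cmul_add_right (f g h : TrigPoly1) : cmul f (g + h) = cmul f g + cmul f h := by
  rw [cmul, cmul, cmul, ← Finsupp.sum_add]
  apply Finsupp.sum_congr
  intro a _
  rw [Finsupp.sum_add_index]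
  · intro b _
    simp only [mul_zero, Finsupp.single_zero]
  · intro b _ x y
    rw [mul_add, Finsupp.single_add]

lemma single_eq' (a n : ℤ) (x : ℂ) (h : a = n) : (Finsupp.single a x : TrigPoly1) n = x := by
  subst h; exact Finsupp.single_eq_same

lemma single_ne' (a n : ℤ) (x : ℂ) (h : ¬ a = n) : (Finsupp.single a x : TrigPoly1) n = 0 :=
  Finsupp.single_eq_of_ne' h

lemma u0m_eq (s : ℝ) (m : ℕ) :
    u0m s m = Finsupp.single (-(m : ℤ)) ((((m:ℝ) ^ (-s) : ℝ) : ℂ))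
      + Finsupp.single (-(m : ℤ) + 1) ((((m:ℝ) ^ (-s) : ℝ) : ℂ))
      + Finsupp.single ((m : ℤ) + 1) ((((m:ℝ) ^ (-s) : ℝ) : ℂ)) := by
  rw [u0m, smul_add, smul_add, Finsupp.smul_single, Finsupp.smul_single, Finsupp.smul_single,
    smul_eq_mul, mul_one]

lemma econj (τ : ℝ) (k : ℤ) :
    (starRingEnd ℂ) (Complex.exp (Complex.I * (τ:ℂ) * (P k : ℂ)))
      = (Complex.exp (Complex.I * (τ:ℂ) * (P k : ℂ)))⁻¹ := by
  rw [← Complex.exp_conj, ← Complex.exp_neg]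
  congr 1
  simp only [map_mul, Complex.conj_I, Complex.conj_ofReal, map_intCast]
  ring

set_option maxHeartbeats 2000000 in
lemma key (s : ℝ) (m : ℕ) (hm : 5 ≤ m) (τ : ℝ) :
    Ncal (propL τ (u0m s m)) (-(m:ℤ))
      = Complex.exp (Complex.I * (τ:ℂ) * (P (-(m:ℤ)) : ℂ)) *
          (Complex.I * ((21 * (m:ℂ) - 14) / 4) * ((((m:ℝ) ^ (-s) : ℝ) : ℂ))^3) := by
  rw [u0m_eq]
  simp only [propL_add, propL_single]
  simp only [Ncal, conjC_add, conjC_single, dx_add, dx_single, absDx_add, absDx_single,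
    cmul_add_left, cmul_add_right, cmul_single_single,
    Finsupp.add_apply, Finsupp.sub_apply, Finsupp.smul_apply, smul_eq_mul]
  simp (disch := omega) only [single_eq', single_ne']
  simp only [map_mul, Complex.conj_ofReal, econj]
  have h1 : |(-(m:ℤ) + - -(m:ℤ))| = 0 := by rw [Int.abs_eq_natAbs]; omega
  have h2 : |(-(m:ℤ) + -(-(m:ℤ) + 1))| = 1 := by rw [Int.abs_eq_natAbs]; omega
  have h3 : |(-(m:ℤ) + 1 + -(-(m:ℤ) + 1))| = 0 := by rw [Int.abs_eq_natAbs]; omega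
  have h4 : |(-(m:ℤ) + -((m:ℤ) + 1))| = 2*(m:ℤ)+1 := by rw [Int.abs_eq_natAbs]; omega
  have h5 : |((m:ℤ) + 1 + -((m:ℤ) + 1))| = 0 := by rw [Int.abs_eq_natAbs]; omega
  rw [h1, h2, h3, h4, h5]
  simp only [Int.cast_zero, Int.cast_one, zero_mul, mul_zero, add_zero, zero_add, one_mul, mul_one]
  have e1 := Complex.exp_ne_zero (Complex.I * (τ:ℂ) * (P (-(m:ℤ)) : ℂ))
  have e2 := Complex.exp_ne_zero (Complex.I * (τ:ℂ) * (P (-(m:ℤ) + 1) : ℂ))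
  have e3 := Complex.exp_ne_zero (Complex.I * (τ:ℂ) * (P ((m:ℤ) + 1) : ℂ))
  generalize Complex.exp (Complex.I * (τ:ℂ) * (P (-(m:ℤ)) : ℂ)) = A at e1 ⊢
  generalize Complex.exp (Complex.I * (τ:ℂ) * (P (-(m:ℤ) + 1) : ℂ)) = B at e2 ⊢
  generalize Complex.exp (Complex.I * (τ:ℂ) * (P ((m:ℤ) + 1) : ℂ)) = C at e3 ⊢
  field_simp
  have hT : A^2*B^2*C^2*A⁻¹*(B⁻¹)^2*(C⁻¹)^2 = A := by
    field_simp
  have hS : A^3*B^4*C^4*(A⁻¹)^2*(B⁻¹)^4*(C⁻¹)^4 = A := by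
    field_simp
  push_cast
  ring

/-- ℓ¹ norm of the coefficients. -/
def Lnorm (f : TrigPoly1) : ℝ := ∑ a ∈ f.support, ‖f a‖

lemma Lnorm_nonneg (f : TrigPoly1) : 0 ≤ Lnorm f :=
  Finset.sum_nonneg fun _ _ => norm_nonneg _

lemma norm_apply_le (f : TrigPoly1) (n : ℤ) : ‖f n‖ ≤ Lnorm f := by
  by_cases h : n ∈ f.support
  · exact Finset.single_le_sum (fun _ _ => norm_nonneg _) h
  · rw [Finsupp.notMem_support_iff.1 h]
    simpa using Lnorm_nonneg f

lemma Lnorm_eq_sum_superset {f : TrigPoly1} {S : Finset ℤ} (h : f.support ⊆ S) :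
    Lnorm f = ∑ a ∈ S, ‖f a‖ := by
  rw [Lnorm]
  exact Finset.sum_subset h fun a _ ha => by
    rw [Finsupp.notMem_support_iff.1 ha, norm_zero]

lemma Lnorm_add_le (f g : TrigPoly1) : Lnorm (f + g) ≤ Lnorm f + Lnorm g := by
  have hsub : (f + g).support ⊆ f.support ∪ g.support := Finsupp.support_add
  rw [Lnorm_eq_sum_superset hsub,
    Lnorm_eq_sum_superset (show f.support ⊆ f.support ∪ g.support from Finset.subset_union_left),
    Lnorm_eq_sum_superset (show g.support ⊆ f.support ∪ g.support from Finset.subset_union_right),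
    ← Finset.sum_add_distrib]
  refine Finset.sum_le_sum fun a _ => ?_
  simpa using norm_add_le (f a) (g a)

lemma Lnorm_neg (f : TrigPoly1) : Lnorm (-f) = Lnorm f := by
  unfold Lnorm
  rw [Finsupp.support_neg]
  exact Finset.sum_congr rfl fun a _ => by simp

lemma Lnorm_sub_le (f g : TrigPoly1) : Lnorm (f - g) ≤ Lnorm f + Lnorm g := by
  rw [sub_eq_add_neg]
  simpa [Lnorm_neg] using Lnorm_add_le f (-g)

lemma Lnorm_smul_le (c : ℂ) (f : TrigPoly1) : Lnorm (c • f) ≤ ‖c‖ * Lnorm f := by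
  have hsub : (c • f).support ⊆ f.support := Finsupp.support_smul
  rw [Lnorm_eq_sum_superset hsub, Lnorm, Finset.mul_sum]
  refine Finset.sum_le_sum fun a _ => ?_
  simp [Finsupp.smul_apply]

lemma Lnorm_single_le (a : ℤ) (x : ℂ) : Lnorm (Finsupp.single a x) ≤ ‖x‖ := by
  by_cases hx : x = 0
  · simp [hx, Lnorm]
  · rw [Lnorm, Finsupp.support_single_ne_zero _ hx, Finset.sum_singleton, Finsupp.single_eq_same]

lemma Lnorm_finset_sum_le {ι : Type*} (s : Finset ι) (F : ι → TrigPoly1) :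
    Lnorm (∑ i ∈ s, F i) ≤ ∑ i ∈ s, Lnorm (F i) := by
  classical
  induction s using Finset.induction_on with
  | empty => simp [Lnorm]
  | insert _ _ h ih =>
    rw [Finset.sum_insert h, Finset.sum_insert h]
    exact le_trans (Lnorm_add_le _ _) (by linarith)

lemma Lnorm_cmul_le (f g : TrigPoly1) : Lnorm (cmul f g) ≤ Lnorm f * Lnorm g := by
  rw [cmul, Finsupp.sum]
  calc Lnorm (∑ a ∈ f.support, g.sum fun b gb => Finsupp.single (a + b) (f a * gb))
      ≤ ∑ a ∈ f.support, Lnorm (g.sum fun b gb => Finsupp.single (a + b) (f a * gb)) :=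
        Lnorm_finset_sum_le _ _
    _ ≤ ∑ a ∈ f.support, ‖f a‖ * Lnorm g := by
        refine Finset.sum_le_sum fun a _ => ?_
        rw [Finsupp.sum]
        calc Lnorm (∑ b ∈ g.support, Finsupp.single (a + b) (f a * g b))
            ≤ ∑ b ∈ g.support, Lnorm (Finsupp.single (a + b) (f a * g b)) :=
              Lnorm_finset_sum_le _ _
          _ ≤ ∑ b ∈ g.support, ‖f a‖ * ‖g b‖ := by
              refine Finset.sum_le_sum fun b _ => ?_
              simpa [norm_mul] using Lnorm_single_le (a + b) (f a * g b)
          _ = ‖f a‖ * Lnorm g := by rw [Lnorm, Finset.mul_sum]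
    _ = Lnorm f * Lnorm g := by rw [Lnorm, Lnorm, Finset.sum_mul]

lemma norm_phase (τ : ℝ) (k : ℤ) : ‖Complex.exp (Complex.I * (τ:ℂ) * (k : ℂ))‖ = 1 := by
  have : Complex.I * (τ:ℂ) * (k : ℂ) = ((τ * (k:ℝ) : ℝ) : ℂ) * Complex.I := by
    push_cast; ring
  rw [this, Complex.norm_exp_ofReal_mul_I]

lemma Lnorm_propL_le (t : ℝ) (f : TrigPoly1) : Lnorm (propL t f) ≤ Lnorm f := by
  have hsub : (propL t f).support ⊆ f.support := Finsupp.support_onFinset_subset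
  rw [Lnorm_eq_sum_superset hsub, Lnorm]
  refine Finset.sum_le_sum fun a _ => ?_
  rw [propL_apply, norm_mul, norm_phase]
  simp

lemma Lnorm_conjC (f : TrigPoly1) : Lnorm (conjC f) = Lnorm f := by
  rw [Lnorm, Lnorm]
  refine (Finset.sum_equiv (Equiv.neg ℤ) (fun a => ?_) (fun a _ => ?_)).symm
  · simp [Finsupp.mem_support_iff, conjC_apply]
  · simp [conjC_apply]

lemma support_le_dx {f : TrigPoly1} {N : ℤ} (hf : ∀ a ∈ f.support, |a| ≤ N) :
    ∀ a ∈ (dx f).support, |a| ≤ N := fun a ha =>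
  hf a (Finsupp.support_onFinset_subset ha)

lemma Lnorm_dx_le {f : TrigPoly1} {N : ℤ} (hN : 0 ≤ N) (hf : ∀ a ∈ f.support, |a| ≤ N) :
    Lnorm (dx f) ≤ (N : ℝ) * Lnorm f := by
  have hsub : (dx f).support ⊆ f.support := Finsupp.support_onFinset_subset
  rw [Lnorm_eq_sum_superset hsub, Lnorm, Finset.mul_sum]
  refine Finset.sum_le_sum fun a ha => ?_
  rw [dx_apply, norm_mul, norm_mul, Complex.norm_I, one_mul]
  have h1 : ‖(a:ℂ)‖ = |(a:ℝ)| := by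
    rw [Complex.norm_intCast]
  rw [h1]
  have h2 : |(a:ℝ)| ≤ (N:ℝ) := by
    have := hf a ha
    rw [← Int.cast_abs]
    exact_mod_cast this
  exact mul_le_mul_of_nonneg_right h2 (norm_nonneg _)

lemma Lnorm_absDx_le {f : TrigPoly1} {N : ℤ} (hN : 0 ≤ N) (hf : ∀ a ∈ f.support, |a| ≤ N) :
    Lnorm (absDx f) ≤ (N : ℝ) * Lnorm f := by
  have hsub : (absDx f).support ⊆ f.support := Finsupp.support_onFinset_subset
  rw [Lnorm_eq_sum_superset hsub, Lnorm, Finset.mul_sum]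
  refine Finset.sum_le_sum fun a ha => ?_
  rw [absDx_apply, norm_mul]
  have h1 : ‖((|a| : ℤ):ℂ)‖ = |(a:ℝ)| := by
    rw [Complex.norm_intCast]
    push_cast
    simp
  rw [h1]
  have h2 : |(a:ℝ)| ≤ (N:ℝ) := by
    have := hf a ha
    rw [← Int.cast_abs]
    exact_mod_cast this
  exact mul_le_mul_of_nonneg_right h2 (norm_nonneg _)

lemma support_cmul_le {f g : TrigPoly1} {A B : ℤ}
    (hf : ∀ a ∈ f.support, |a| ≤ A) (hg : ∀ b ∈ g.support, |b| ≤ B) :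
    ∀ c ∈ (cmul f g).support, |c| ≤ A + B := by
  intro c hc
  rw [Finsupp.mem_support_iff] at hc
  rw [cmul, Finsupp.sum, Finsupp.finset_sum_apply] at hc
  obtain ⟨a, ha, hne⟩ := Finset.exists_ne_zero_of_sum_ne_zero hc
  rw [Finsupp.sum, Finsupp.finset_sum_apply] at hne
  obtain ⟨b, hb, hne2⟩ := Finset.exists_ne_zero_of_sum_ne_zero hne
  have hcab : c = a + b := by
    by_contra hcc
    exact hne2 (Finsupp.single_eq_of_ne' fun h => hcc h.symm)
  have := hf a ha
  have := hg b hb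
  rw [hcab]
  calc |a + b| ≤ |a| + |b| := abs_add_le a b
    _ ≤ A + B := by omega

lemma support_conjC_le {f : TrigPoly1} {N : ℤ} (hf : ∀ a ∈ f.support, |a| ≤ N) :
    ∀ a ∈ (conjC f).support, |a| ≤ N := by
  intro a ha
  rw [Finsupp.mem_support_iff, conjC_apply] at ha
  have : f (-a) ≠ 0 := fun h => ha (by rw [h, map_zero])
  have h2 := hf (-a) (Finsupp.mem_support_iff.2 this)
  rw [abs_neg] at h2
  exact h2

lemma support_propL_le {t : ℝ} {f : TrigPoly1} {N : ℤ} (hf : ∀ a ∈ f.support, |a| ≤ N) :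
    ∀ a ∈ (propL t f).support, |a| ≤ N := fun a ha =>
  hf a (Finsupp.support_onFinset_subset ha)

lemma support_u0m_le (s : ℝ) (m : ℕ) :
    ∀ a ∈ (u0m s m).support, |a| ≤ (m:ℤ) + 1 := by
  intro a ha
  rw [Finsupp.mem_support_iff] at ha
  by_contra hcon
  have h2 := lt_abs.mp (lt_of_not_ge hcon)
  apply ha
  rw [u0m_eq]
  simp only [Finsupp.add_apply]
  simp (disch := omega) only [single_ne']
  ring

lemma norm_mu (x : ℝ) (hx : 0 ≤ x) : ‖((x:ℝ):ℂ)‖ = x := by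
  rw [Complex.norm_real, Real.norm_eq_abs, _root_.abs_of_nonneg hx]

lemma Lnorm_u0m (s : ℝ) (m : ℕ) : Lnorm (u0m s m) ≤ 3 * (m:ℝ)^(-s) := by
  have hμ0 : (0:ℝ) ≤ (m:ℝ)^(-s) := Real.rpow_nonneg (Nat.cast_nonneg m) _
  rw [u0m_eq]
  calc Lnorm (Finsupp.single (-(m : ℤ)) ((((m:ℝ) ^ (-s) : ℝ) : ℂ))
      + Finsupp.single (-(m : ℤ) + 1) ((((m:ℝ) ^ (-s) : ℝ) : ℂ))
      + Finsupp.single ((m : ℤ) + 1) ((((m:ℝ) ^ (-s) : ℝ) : ℂ)))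
      ≤ Lnorm (Finsupp.single (-(m : ℤ)) ((((m:ℝ) ^ (-s) : ℝ) : ℂ))
          + Finsupp.single (-(m : ℤ) + 1) ((((m:ℝ) ^ (-s) : ℝ) : ℂ)))
        + Lnorm (Finsupp.single ((m : ℤ) + 1) ((((m:ℝ) ^ (-s) : ℝ) : ℂ))) := Lnorm_add_le _ _
    _ ≤ (Lnorm (Finsupp.single (-(m : ℤ)) ((((m:ℝ) ^ (-s) : ℝ) : ℂ)))
          + Lnorm (Finsupp.single (-(m : ℤ) + 1) ((((m:ℝ) ^ (-s) : ℝ) : ℂ))))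
        + Lnorm (Finsupp.single ((m : ℤ) + 1) ((((m:ℝ) ^ (-s) : ℝ) : ℂ))) := by
        have := Lnorm_add_le (Finsupp.single (-(m : ℤ)) ((((m:ℝ) ^ (-s) : ℝ) : ℂ)))
          (Finsupp.single (-(m : ℤ) + 1) ((((m:ℝ) ^ (-s) : ℝ) : ℂ)))
        linarith
    _ ≤ (m:ℝ)^(-s) + (m:ℝ)^(-s) + (m:ℝ)^(-s) := by
        have h1 := Lnorm_single_le (-(m : ℤ)) ((((m:ℝ) ^ (-s) : ℝ) : ℂ))
        have h2 := Lnorm_single_le (-(m : ℤ) + 1) ((((m:ℝ) ^ (-s) : ℝ) : ℂ))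
        have h3 := Lnorm_single_le ((m : ℤ) + 1) ((((m:ℝ) ^ (-s) : ℝ) : ℂ))
        rw [norm_mu _ hμ0] at h1 h2 h3
        linarith
    _ = 3 * (m:ℝ)^(-s) := by ring

lemma Ncal_u0m_bound (s : ℝ) (m : ℕ) (τ : ℝ) (n : ℤ) :
    ‖Ncal (propL τ (u0m s m)) n‖ ≤ 100 * ((m:ℝ)+1) * ((m:ℝ)^(-s))^3 := by
  have hμ0 : (0:ℝ) ≤ (m:ℝ)^(-s) := Real.rpow_nonneg (Nat.cast_nonneg m) _
  set μ := (m:ℝ)^(-s) with hμ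
  set u := propL τ (u0m s m) with hu
  have hsu : ∀ a ∈ u.support, |a| ≤ (m:ℤ)+1 := support_propL_le (support_u0m_le s m)
  have hscu : ∀ a ∈ (conjC u).support, |a| ≤ (m:ℤ)+1 := support_conjC_le hsu
  have hN0 : (0:ℤ) ≤ (m:ℤ)+1 := by positivity
  have hLu : Lnorm u ≤ 3*μ := le_trans (Lnorm_propL_le _ _) (Lnorm_u0m s m)
  have hLcu : Lnorm (conjC u) ≤ 3*μ := by rw [Lnorm_conjC]; exact hLu
  have hLuu : Lnorm (cmul u (conjC u)) ≤ 9*μ^2 := by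
    calc Lnorm (cmul u (conjC u)) ≤ Lnorm u * Lnorm (conjC u) := Lnorm_cmul_le _ _
      _ ≤ (3*μ) * (3*μ) := by
          apply mul_le_mul hLu hLcu (Lnorm_nonneg _) (by positivity)
      _ = 9*μ^2 := by ring
  have hLu2 : Lnorm (cmul u u) ≤ 9*μ^2 := by
    calc Lnorm (cmul u u) ≤ Lnorm u * Lnorm u := Lnorm_cmul_le _ _
      _ ≤ (3*μ) * (3*μ) := mul_le_mul hLu hLu (Lnorm_nonneg _) (by positivity)
      _ = 9*μ^2 := by ring
  have hcast : (((m:ℤ)+1 : ℤ) : ℝ) = (m:ℝ)+1 := by push_cast; ring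
  have hLdxu : Lnorm (dx u) ≤ ((m:ℝ)+1) * (3*μ) := by
    have := Lnorm_dx_le hN0 hsu
    rw [hcast] at this
    refine le_trans this ?_
    exact mul_le_mul_of_nonneg_left hLu (by positivity)
  have hLdxcu : Lnorm (dx (conjC u)) ≤ ((m:ℝ)+1) * (3*μ) := by
    have := Lnorm_dx_le hN0 hscu
    rw [hcast] at this
    refine le_trans this ?_
    exact mul_le_mul_of_nonneg_left hLcu (by positivity)
  have hsuu : ∀ a ∈ (cmul u (conjC u)).support, |a| ≤ ((m:ℤ)+1) + ((m:ℤ)+1) :=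
    support_cmul_le hsu hscu
  have hLabs : Lnorm (absDx (cmul u (conjC u))) ≤ (2*(m:ℝ)+2) * (9*μ^2) := by
    have := Lnorm_absDx_le (by positivity) hsuu
    have hc2 : ((((m:ℤ)+1) + ((m:ℤ)+1) : ℤ) : ℝ) = 2*(m:ℝ)+2 := by push_cast; ring
    rw [hc2] at this
    refine le_trans this ?_
    exact mul_le_mul_of_nonneg_left hLuu (by positivity)
  have key1 : ‖Ncal u n‖ ≤ Lnorm (Ncal u) := norm_apply_le _ _
  have key2 : Lnorm (Ncal u)
      ≤ ‖-(Complex.I / 2)‖ * (Lnorm (cmul u (conjC u)) * Lnorm u)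
        + ‖(3:ℂ)/2‖ * (Lnorm (cmul u (conjC u)) * Lnorm (dx u))
        + ‖(1:ℂ)/4‖ * (Lnorm (cmul u u) * Lnorm (dx (conjC u)))
        + ‖Complex.I/2‖ * (Lnorm u * Lnorm (absDx (cmul u (conjC u)))) := by
    rw [Ncal]
    refine le_trans (Lnorm_add_le _ _) ?_
    have t1 : Lnorm ((-(Complex.I / 2)) • cmul (cmul u (conjC u)) u
        - ((3 : ℂ) / 2) • cmul (cmul u (conjC u)) (dx u)
        - ((1 : ℂ) / 4) • cmul (cmul u u) (dx (conjC u)))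
        ≤ ‖-(Complex.I / 2)‖ * (Lnorm (cmul u (conjC u)) * Lnorm u)
        + ‖(3:ℂ)/2‖ * (Lnorm (cmul u (conjC u)) * Lnorm (dx u))
        + ‖(1:ℂ)/4‖ * (Lnorm (cmul u u) * Lnorm (dx (conjC u))) := by
      refine le_trans (Lnorm_sub_le _ _) ?_
      have t2 := Lnorm_sub_le ((-(Complex.I / 2)) • cmul (cmul u (conjC u)) u)
        (((3 : ℂ) / 2) • cmul (cmul u (conjC u)) (dx u))
      have b1 := le_trans (Lnorm_smul_le (-(Complex.I / 2)) (cmul (cmul u (conjC u)) u))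
        (mul_le_mul_of_nonneg_left (Lnorm_cmul_le _ _) (norm_nonneg _))
      have b2 := le_trans (Lnorm_smul_le ((3:ℂ)/2) (cmul (cmul u (conjC u)) (dx u)))
        (mul_le_mul_of_nonneg_left (Lnorm_cmul_le _ _) (norm_nonneg _))
      have b3 := le_trans (Lnorm_smul_le ((1:ℂ)/4) (cmul (cmul u u) (dx (conjC u))))
        (mul_le_mul_of_nonneg_left (Lnorm_cmul_le _ _) (norm_nonneg _))
      linarith
    have b4 := le_trans (Lnorm_smul_le (Complex.I/2) (cmul u (absDx (cmul u (conjC u)))))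
      (mul_le_mul_of_nonneg_left (Lnorm_cmul_le _ _) (norm_nonneg _))
    linarith
  have hn1 : ‖-(Complex.I / 2)‖ = 1/2 := by
    rw [norm_neg, norm_div, Complex.norm_I]
    norm_num
  have hn2 : ‖(3:ℂ)/2‖ = 3/2 := by
    rw [norm_div]
    norm_num
  have hn3 : ‖(1:ℂ)/4‖ = 1/4 := by
    rw [norm_div]
    norm_num
  have hn4 : ‖Complex.I/2‖ = 1/2 := by
    rw [norm_div, Complex.norm_I]
    norm_num
  rw [hn1, hn2, hn3, hn4] at key2
  have hm0 : (0:ℝ) ≤ (m:ℝ) := Nat.cast_nonneg m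
  have l1 : Lnorm (cmul u (conjC u)) * Lnorm u ≤ 9*μ^2 * (3*μ) :=
    mul_le_mul hLuu hLu (Lnorm_nonneg _) (by positivity)
  have l2 : Lnorm (cmul u (conjC u)) * Lnorm (dx u) ≤ 9*μ^2 * (((m:ℝ)+1) * (3*μ)) :=
    mul_le_mul hLuu hLdxu (Lnorm_nonneg _) (by positivity)
  have l3 : Lnorm (cmul u u) * Lnorm (dx (conjC u)) ≤ 9*μ^2 * (((m:ℝ)+1) * (3*μ)) :=
    mul_le_mul hLu2 hLdxcu (Lnorm_nonneg _) (by positivity)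
  have l4 : Lnorm u * Lnorm (absDx (cmul u (conjC u))) ≤ (3*μ) * ((2*(m:ℝ)+2) * (9*μ^2)) :=
    mul_le_mul hLu hLabs (Lnorm_nonneg _) (by positivity)
  have hμ3 : (0:ℝ) ≤ μ^3 := by positivity
  nlinarith [key1, key2, l1, l2, l3, l4, hμ3, hm0, mul_nonneg hm0 hμ3]

lemma Ncal_u0m_vanish (s : ℝ) (m : ℕ) (τ : ℝ) (n : ℤ)
    (hn : ¬(-(3*(m:ℤ)+3) ≤ n ∧ n ≤ 3*(m:ℤ)+3)) :
    Ncal (propL τ (u0m s m)) n = 0 := by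
  set u := propL τ (u0m s m) with hu
  have hsu : ∀ a ∈ u.support, |a| ≤ (m:ℤ)+1 := support_propL_le (support_u0m_le s m)
  have hscu : ∀ a ∈ (conjC u).support, |a| ≤ (m:ℤ)+1 := support_conjC_le hsu
  have hnot : ∀ (f : TrigPoly1), (∀ a ∈ f.support, |a| ≤ (((m:ℤ)+1) + ((m:ℤ)+1)) + ((m:ℤ)+1)) →
      f n = 0 := by
    intro f hf
    by_contra h
    have := hf n (Finsupp.mem_support_iff.2 h)
    have := abs_le.1 this
    omega
  have h1 : (cmul (cmul u (conjC u)) u) n = 0 :=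
    hnot _ (support_cmul_le (support_cmul_le hsu hscu) hsu)
  have h2 : (cmul (cmul u (conjC u)) (dx u)) n = 0 :=
    hnot _ (support_cmul_le (support_cmul_le hsu hscu) (support_le_dx hsu))
  have h3 : (cmul (cmul u u) (dx (conjC u))) n = 0 :=
    hnot _ (support_cmul_le (support_cmul_le hsu hsu) (support_le_dx hscu))
  have h4 : (cmul u (absDx (cmul u (conjC u)))) n = 0 := by
    refine hnot _ ?_
    have habs : ∀ a ∈ (absDx (cmul u (conjC u))).support, |a| ≤ ((m:ℤ)+1) + ((m:ℤ)+1) :=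
      fun a ha => support_cmul_le hsu hscu a (Finsupp.support_onFinset_subset ha)
    intro a ha
    have := support_cmul_le hsu habs a ha
    omega
  rw [Ncal, Finsupp.add_apply, Finsupp.sub_apply, Finsupp.sub_apply,
    Finsupp.smul_apply, Finsupp.smul_apply, Finsupp.smul_apply, Finsupp.smul_apply,
    h1, h2, h3, h4]
  simp

lemma u3_eval (s : ℝ) (m : ℕ) (hm : 5 ≤ m) (t : ℝ) :
    u3 (u0m s m) t (-(m:ℤ))
      = t • (Complex.exp (Complex.I * (t:ℂ) * (P (-(m:ℤ)) : ℂ)) *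
          (Complex.I * ((21 * (m:ℂ) - 14) / 4) * ((((m:ℝ) ^ (-s) : ℝ) : ℂ))^3)) := by
  rw [u3]
  rw [intervalIntegral.integral_congr
    (g := fun _ : ℝ => Complex.exp (Complex.I * (t:ℂ) * (P (-(m:ℤ)) : ℂ)) *
      (Complex.I * ((21 * (m:ℂ) - 14) / 4) * ((((m:ℝ) ^ (-s) : ℝ) : ℂ))^3))]
  · rw [intervalIntegral.integral_const, sub_zero]
  · intro τ _
    simp only
    rw [key s m hm τ, ← mul_assoc, ← Complex.exp_add]
    congr 2
    push_cast
    ring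

lemma u3_vanish (s : ℝ) (m : ℕ) (t : ℝ) (n : ℤ)
    (hn : ¬(-(3*(m:ℤ)+3) ≤ n ∧ n ≤ 3*(m:ℤ)+3)) :
    u3 (u0m s m) t n = 0 := by
  rw [u3]
  rw [intervalIntegral.integral_congr (g := fun _ : ℝ => (0:ℂ))]
  · simp
  · intro τ _
    simp only
    rw [Ncal_u0m_vanish s m τ n hn, mul_zero]

lemma u3_bound (s : ℝ) (m : ℕ) (t : ℝ) (ht : t ∈ Set.Icc (0:ℝ) 1) (n : ℤ) :
    ‖u3 (u0m s m) t n‖ ≤ 100 * ((m:ℝ)+1) * ((m:ℝ)^(-s))^3 := by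
  have hb : ∀ τ ∈ Set.uIoc (0:ℝ) t,
      ‖Complex.exp (Complex.I * ((t - τ : ℝ) : ℂ) * (P n : ℂ)) *
        (Ncal (propL τ (u0m s m))) n‖ ≤ 100 * ((m:ℝ)+1) * ((m:ℝ)^(-s))^3 := by
    intro τ _
    rw [norm_mul, norm_phase]
    rw [one_mul]
    exact Ncal_u0m_bound s m τ n
  have := intervalIntegral.norm_integral_le_of_norm_le_const hb
  rw [u3]
  refine le_trans this ?_
  have h1 : |t - 0| ≤ 1 := by
    rw [abs_le]
    constructor <;> [linarith [ht.1]; linarith [ht.2]]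
  have h2 : (0:ℝ) ≤ 100 * ((m:ℝ)+1) * ((m:ℝ)^(-s))^3 := by
    have : (0:ℝ) ≤ (m:ℝ)^(-s) := Real.rpow_nonneg (Nat.cast_nonneg m) _
    positivity
  nlinarith

lemma rpow_half_sq {A : ℝ} (hA : 0 ≤ A) : (A^2)^((1:ℝ)/2) = A := by
  rw [← Real.rpow_natCast A 2, ← Real.rpow_mul hA]
  norm_num

lemma u0m_norm_le (s : ℝ) (hs : s < 0) (m : ℕ) (hm : 2 ≤ m) : HsNorm s (u0m s m) ≤ 2 := by
  have hm2 : (2:ℝ) ≤ m := by exact_mod_cast hm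
  have hmpos : (0:ℝ) < m := by linarith
  set μ := (m:ℝ)^(-s) with hμdef
  have hμpos : 0 < μ := Real.rpow_pos_of_pos hmpos _
  have hval : ∀ a : ℤ, ‖((μ:ℝ):ℂ)‖^2 = μ^2 := by
    intro a
    rw [norm_mu _ (le_of_lt hμpos)]
  have hμsq : μ^2 = (m:ℝ)^(-(2*s)) := by
    rw [hμdef, ← Real.rpow_natCast ((m:ℝ)^(-s)) 2, ← Real.rpow_mul (le_of_lt hmpos)]
    norm_num
    ring_nf
  have hone : (m:ℝ)^(2*s) * μ^2 = 1 := by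
    rw [hμsq, ← Real.rpow_add hmpos]
    norm_num
  -- the three coefficient values
  have hv1 : u0m s m (-(m:ℤ)) = ((μ:ℝ):ℂ) := by
    rw [u0m_eq]
    simp only [Finsupp.add_apply]
    simp (disch := omega) only [single_eq', single_ne']
    ring
  have hv2 : u0m s m (-(m:ℤ)+1) = ((μ:ℝ):ℂ) := by
    rw [u0m_eq]
    simp only [Finsupp.add_apply]
    simp (disch := omega) only [single_eq', single_ne']
    ring
  have hv3 : u0m s m ((m:ℤ)+1) = ((μ:ℝ):ℂ) := by
    rw [u0m_eq]
    simp only [Finsupp.add_apply]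
    simp (disch := omega) only [single_eq', single_ne']
    ring
  set S₀ : Finset ℤ := {-(m:ℤ), -(m:ℤ)+1, (m:ℤ)+1} with hS₀
  have hvan : ∀ n ∉ S₀, (1 + |(n:ℝ)|)^(2*s) * ‖u0m s m n‖^2 = 0 := by
    intro n hn
    rw [hS₀] at hn
    simp only [Finset.mem_insert, Finset.mem_singleton] at hn
    push_neg at hn
    obtain ⟨h1, h2, h3⟩ := hn
    have hz : u0m s m n = 0 := by
      rw [u0m_eq]
      simp only [Finsupp.add_apply]
      simp (disch := omega) only [single_ne']
      ring
    rw [hz]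
    simp
  have hsum : Summable (fun n : ℤ => (1 + |(n:ℝ)|)^(2*s) * ‖u0m s m n‖^2) :=
    summable_of_ne_finset_zero hvan
  rw [HsNorm, tsum_eq_sum hvan]
  have hd1 : (-(m:ℤ)) ∉ ({-(m:ℤ)+1, (m:ℤ)+1} : Finset ℤ) := by
    simp only [Finset.mem_insert, Finset.mem_singleton]
    omega
  have hd2 : (-(m:ℤ)+1) ∉ ({(m:ℤ)+1} : Finset ℤ) := by
    simp only [Finset.mem_singleton]
    omega
  rw [hS₀, Finset.sum_insert hd1, Finset.sum_insert hd2, Finset.sum_singleton]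
  rw [hv1, hv2, hv3, norm_mu _ (le_of_lt hμpos)]
  -- absolute values of the three frequencies
  have ha1 : |((-(m:ℤ) : ℤ):ℝ)| = (m:ℝ) := by
    push_cast
    rw [abs_neg, _root_.abs_of_nonneg (le_of_lt hmpos)]
  have ha2 : |((-(m:ℤ)+1 : ℤ):ℝ)| = (m:ℝ) - 1 := by
    push_cast
    rw [abs_of_nonpos (by linarith : ((-(m:ℝ))+1) ≤ 0)]
    ring
  have ha3 : |(((m:ℤ)+1 : ℤ):ℝ)| = (m:ℝ) + 1 := by
    push_cast
    rw [_root_.abs_of_nonneg (by linarith : (0:ℝ) ≤ (m:ℝ)+1)]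
  rw [ha1, ha2, ha3]
  have hb : ∀ x : ℝ, (m:ℝ) ≤ x → x^(2*s) * μ^2 ≤ 1 := by
    intro x hx
    have h1 : x^(2*s) ≤ (m:ℝ)^(2*s) :=
      Real.rpow_le_rpow_of_nonpos hmpos hx (by linarith)
    calc x^(2*s) * μ^2 ≤ (m:ℝ)^(2*s) * μ^2 := by nlinarith [sq_nonneg μ]
      _ = 1 := hone
  have t1 : (1 + (m:ℝ))^(2*s) * μ^2 ≤ 1 := hb _ (by linarith)
  have t2 : (1 + ((m:ℝ)-1))^(2*s) * μ^2 ≤ 1 := hb _ (by linarith)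
  have t3 : (1 + ((m:ℝ)+1))^(2*s) * μ^2 ≤ 1 := hb _ (by linarith)
  have hsum3 : (1 + (m:ℝ))^(2*s) * μ^2 + (1 + ((m:ℝ)-1))^(2*s) * μ^2
      + (1 + ((m:ℝ)+1))^(2*s) * μ^2 ≤ 3 := by linarith
  have hnn : (0:ℝ) ≤ (1 + (m:ℝ))^(2*s) * μ^2 + (1 + ((m:ℝ)-1))^(2*s) * μ^2
      + (1 + ((m:ℝ)+1))^(2*s) * μ^2 := by
    have n1 : (0:ℝ) ≤ (1 + (m:ℝ))^(2*s) := Real.rpow_nonneg (by linarith) _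
    have n2 : (0:ℝ) ≤ (1 + ((m:ℝ)-1))^(2*s) := Real.rpow_nonneg (by linarith) _
    have n3 : (0:ℝ) ≤ (1 + ((m:ℝ)+1))^(2*s) := Real.rpow_nonneg (by linarith) _
    nlinarith [sq_nonneg μ]
  calc ((1 + (m:ℝ))^(2*s) * μ^2 + ((1 + ((m:ℝ)-1))^(2*s) * μ^2
      + (1 + ((m:ℝ)+1))^(2*s) * μ^2))^((1:ℝ)/2)
      ≤ (3:ℝ)^((1:ℝ)/2) := Real.rpow_le_rpow (by linarith) (by linarith) (by norm_num)
    _ ≤ ((2:ℝ)^2)^((1:ℝ)/2) := Real.rpow_le_rpow (by norm_num) (by norm_num) (by norm_num)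
    _ = 2 := rpow_half_sq (by norm_num)

lemma u3_summable (s : ℝ) (m : ℕ) (t : ℝ) :
    Summable (fun n : ℤ => (1 + |(n:ℝ)|)^(2*s) * ‖u3 (u0m s m) t n‖^2) := by
  apply summable_of_ne_finset_zero (s := Finset.Icc (-(3*(m:ℤ)+3)) (3*(m:ℤ)+3))
  intro n hn
  rw [Finset.mem_Icc] at hn
  rw [u3_vanish s m t n hn]
  simp

lemma u3_tsum_eq (s : ℝ) (m : ℕ) (t : ℝ) :
    (∑' n : ℤ, (1 + |(n:ℝ)|)^(2*s) * ‖u3 (u0m s m) t n‖^2)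
      = ∑ n ∈ Finset.Icc (-(3*(m:ℤ)+3)) (3*(m:ℤ)+3),
          (1 + |(n:ℝ)|)^(2*s) * ‖u3 (u0m s m) t n‖^2 := by
  apply tsum_eq_sum
  intro n hn
  rw [Finset.mem_Icc] at hn
  rw [u3_vanish s m t n hn]
  simp

lemma u3_HsNorm_le (s : ℝ) (hs : s < 0) (m : ℕ) (t : ℝ) (ht : t ∈ Set.Icc (0:ℝ) 1) :
    HsNorm s (u3 (u0m s m) t)
      ≤ ((6*(m:ℝ)+7) * (100 * ((m:ℝ)+1) * ((m:ℝ)^(-s))^3)^2)^((1:ℝ)/2) := by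
  have hK0 : (0:ℝ) ≤ 100 * ((m:ℝ)+1) * ((m:ℝ)^(-s))^3 := by
    have : (0:ℝ) ≤ (m:ℝ)^(-s) := Real.rpow_nonneg (Nat.cast_nonneg m) _
    positivity
  rw [HsNorm, u3_tsum_eq]
  apply Real.rpow_le_rpow
  · apply Finset.sum_nonneg
    intro n _
    have : (0:ℝ) ≤ (1 + |(n:ℝ)|)^(2*s) := Real.rpow_nonneg (by positivity) _
    positivity
  · calc ∑ n ∈ Finset.Icc (-(3*(m:ℤ)+3)) (3*(m:ℤ)+3),
          (1 + |(n:ℝ)|)^(2*s) * ‖u3 (u0m s m) t n‖^2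
        ≤ ∑ n ∈ Finset.Icc (-(3*(m:ℤ)+3)) (3*(m:ℤ)+3),
            (100 * ((m:ℝ)+1) * ((m:ℝ)^(-s))^3)^2 := by
          refine Finset.sum_le_sum fun n _ => ?_
          have h1 : (1 + |(n:ℝ)|)^(2*s) ≤ 1 :=
            Real.rpow_le_one_of_one_le_of_nonpos (by linarith [abs_nonneg (n:ℝ)]) (by linarith)
          have h2 : ‖u3 (u0m s m) t n‖^2 ≤ (100 * ((m:ℝ)+1) * ((m:ℝ)^(-s))^3)^2 := by
            have := u3_bound s m t ht n
            nlinarith [norm_nonneg (u3 (u0m s m) t n)]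
          have h3 : (0:ℝ) ≤ (1 + |(n:ℝ)|)^(2*s) := Real.rpow_nonneg (by positivity) _
          nlinarith [sq_nonneg (‖u3 (u0m s m) t n‖)]
      _ ≤ (6*(m:ℝ)+7) * (100 * ((m:ℝ)+1) * ((m:ℝ)^(-s))^3)^2 := by
          rw [Finset.sum_const]
          have hcard : (Finset.Icc (-(3*(m:ℤ)+3)) (3*(m:ℤ)+3)).card = 6*m+7 := by
            rw [Int.card_Icc]
            omega
          rw [hcard, nsmul_eq_mul]
          have : ((6*m+7 : ℕ):ℝ) = 6*(m:ℝ)+7 := by push_cast; ring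
          rw [this]
  · norm_num

lemma u3_lower (s : ℝ) (hs : s < 0) (m : ℕ) (hm : 5 ≤ m) :
    (2:ℝ)^s * (m:ℝ)^(-(2*s)) ≤ HsNorm s (u3 (u0m s m) 1) := by
  have hm5 : (5:ℝ) ≤ m := by exact_mod_cast hm
  have hmpos : (0:ℝ) < m := by linarith
  have hm1 : (1:ℝ) ≤ m := by linarith
  set μ := (m:ℝ)^(-s) with hμdef
  have hμpos : 0 < μ := Real.rpow_pos_of_pos hmpos _
  -- value of the coefficient at -m, t = 1
  have hA : ‖u3 (u0m s m) 1 (-(m:ℤ))‖ = (21*(m:ℝ) - 14)/4 * μ^3 := by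
    rw [u3_eval s m hm 1]
    have h1c : ((1:ℝ):ℂ) = ((1:ℝ):ℂ) := rfl
    rw [real_smul]
    rw [norm_mul, norm_mul, norm_mul, norm_mul]
    rw [Complex.norm_I, norm_phase 1 (P (-(m:ℤ)))]
    have hc : ‖(21 * (m:ℂ) - 14) / 4‖ = (21*(m:ℝ) - 14)/4 := by
      have : (21 * (m:ℂ) - 14) / 4 = (((21*(m:ℝ) - 14)/4 : ℝ) : ℂ) := by push_cast; ring
      rw [this, norm_mu _ (by linarith)]
    rw [hc]
    have hμ3 : ‖(((μ:ℝ)):ℂ)^3‖ = μ^3 := by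
      rw [norm_pow, norm_mu _ (le_of_lt hμpos)]
    rw [hμ3]
    simp
  -- the single-term lower bound for the tsum
  have hterm : (1 + |(((-(m:ℤ)):ℤ):ℝ)|)^(2*s) * ‖u3 (u0m s m) 1 (-(m:ℤ))‖^2
      ≤ ∑' n : ℤ, (1 + |(n:ℝ)|)^(2*s) * ‖u3 (u0m s m) 1 n‖^2 := by
    apply Summable.le_tsum (u3_summable s m 1) (-(m:ℤ))
    intro n _
    have : (0:ℝ) ≤ (1 + |(n:ℝ)|)^(2*s) := Real.rpow_nonneg (by positivity) _
    positivity
  have habs : |(((-(m:ℤ)):ℤ):ℝ)| = (m:ℝ) := by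
    push_cast
    rw [abs_neg, _root_.abs_of_nonneg (le_of_lt hmpos)]
  rw [habs, hA] at hterm
  -- compute the lower bound
  set A := (21*(m:ℝ) - 14)/4 * μ^3 with hAdef
  have hA0 : 0 ≤ A := by
    have : (0:ℝ) ≤ μ^3 := by positivity
    have : (0:ℝ) ≤ (21*(m:ℝ) - 14)/4 := by linarith
    rw [hAdef]
    positivity
  have hHs : ((1 + (m:ℝ))^(2*s) * A^2)^((1:ℝ)/2) ≤ HsNorm s (u3 (u0m s m) 1) := by
    rw [HsNorm]
    apply Real.rpow_le_rpow _ hterm (by norm_num)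
    have : (0:ℝ) ≤ (1 + (m:ℝ))^(2*s) := Real.rpow_nonneg (by linarith) _
    positivity
  have heq : ((1 + (m:ℝ))^(2*s) * A^2)^((1:ℝ)/2) = (1 + (m:ℝ))^s * A := by
    rw [Real.mul_rpow (Real.rpow_nonneg (by linarith) _) (by positivity)]
    rw [rpow_half_sq hA0]
    congr 1
    rw [← Real.rpow_mul (by linarith : (0:ℝ) ≤ 1 + (m:ℝ))]
    congr 1
    ring
  rw [heq] at hHs
  refine le_trans ?_ hHs
  -- (2m)^s ≤ (1+m)^s and m * μ^3 ≤ A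
  have hstep1 : (2*(m:ℝ))^s ≤ (1 + (m:ℝ))^s :=
    Real.rpow_le_rpow_of_nonpos (by linarith) (by linarith) (le_of_lt hs)
  have hstep2 : (m:ℝ) * μ^3 ≤ A := by
    rw [hAdef]
    have : (0:ℝ) ≤ μ^3 := by positivity
    nlinarith
  have h2m : (2*(m:ℝ))^s = (2:ℝ)^s * (m:ℝ)^s :=
    Real.mul_rpow (by norm_num) (le_of_lt hmpos)
  have hcomb : (2:ℝ)^s * (m:ℝ)^(-(2*s)) ≤ (2*(m:ℝ))^s * ((m:ℝ) * μ^3) := by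
    rw [h2m]
    have hμ3 : μ^3 = (m:ℝ)^(-(3*s)) := by
      rw [hμdef, ← Real.rpow_natCast ((m:ℝ)^(-s)) 3, ← Real.rpow_mul (le_of_lt hmpos)]
      norm_num
      ring_nf
    rw [hμ3]
    have hm' : (m:ℝ) = (m:ℝ)^(1:ℝ) := (Real.rpow_one _).symm
    calc (2:ℝ)^s * (m:ℝ)^(-(2*s))
        ≤ (2:ℝ)^s * (m:ℝ)^(1-2*s) := by
          have h2s : (0:ℝ) < (2:ℝ)^s := Real.rpow_pos_of_pos (by norm_num) _
          have := Real.rpow_le_rpow_of_exponent_le hm1 (by linarith : -(2*s) ≤ 1-2*s)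
          nlinarith
      _ = (2:ℝ)^s * ((m:ℝ)^s * ((m:ℝ) * (m:ℝ)^(-(3*s)))) := by
          have hx : (m:ℝ)^s * ((m:ℝ) * (m:ℝ)^(-(3*s))) = (m:ℝ)^(1-2*s) := by
            nth_rewrite 2 [hm']
            rw [← Real.rpow_add hmpos, ← Real.rpow_add hmpos]
            congr 1
            ring
          rw [hx]
      _ = (2:ℝ)^s * (m:ℝ)^s * ((m:ℝ) * (m:ℝ)^(-(3*s))) := by ring
  refine le_trans hcomb ?_
  have hmmu : (0:ℝ) ≤ (m:ℝ) * μ^3 := by positivity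
  have h2mpos : (0:ℝ) ≤ (2*(m:ℝ))^s := Real.rpow_nonneg (by linarith) _
  nlinarith [hstep1, hstep2, Real.rpow_pos_of_pos (show (0:ℝ) < 2*(m:ℝ) by linarith) s]

lemma HsNorm_nonneg (s : ℝ) (g : ℤ → ℂ) : 0 ≤ HsNorm s g :=
  Real.rpow_nonneg (tsum_nonneg fun n =>
    mul_nonneg (Real.rpow_nonneg (by positivity) _) (by positivity)) _

lemma sup_lower (s : ℝ) (hs : s < 0) (m : ℕ) (hm : 5 ≤ m) :
    (2:ℝ)^s * (m : ℝ) ^ (-(2 * s))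
      ≤ ⨆ t : Set.Icc (0:ℝ) 1, HsNorm s (u3 (u0m s m) t) := by
  haveI : Nonempty (Set.Icc (0:ℝ) 1) := ⟨⟨0, by norm_num⟩⟩
  have hbdd : BddAbove (Set.range fun t : Set.Icc (0:ℝ) 1 => HsNorm s (u3 (u0m s m) t)) := by
    refine ⟨((6*(m:ℝ)+7) * (100 * ((m:ℝ)+1) * ((m:ℝ)^(-s))^3)^2)^((1:ℝ)/2), ?_⟩
    rintro x ⟨t, rfl⟩
    exact u3_HsNorm_le s hs m t t.2
  calc (2:ℝ)^s * (m : ℝ) ^ (-(2 * s)) ≤ HsNorm s (u3 (u0m s m) 1) := u3_lower s hs m hm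
    _ = HsNorm s (u3 (u0m s m) ((⟨1, by norm_num⟩ : Set.Icc (0:ℝ) 1) : ℝ)) := rfl
    _ ≤ ⨆ t : Set.Icc (0:ℝ) 1, HsNorm s (u3 (u0m s m) t) :=
        le_ciSup hbdd (⟨1, by norm_num⟩ : Set.Icc (0:ℝ) 1)

theorem stmt19' (s : ℝ) (hs : s < 0) :
    (∃ C₀ : ℝ, 0 < C₀ ∧ ∃ c : ℝ, 0 < c ∧
      (∀ m : ℕ, 2 ≤ m → HsNorm s (u0m s m) ≤ C₀) ∧
      ∃ M : ℕ, ∀ m : ℕ, M ≤ m →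
        c * (m : ℝ) ^ (-(2 * s)) ≤ ⨆ t : Set.Icc (0:ℝ) 1, HsNorm s (u3 (u0m s m) t)) ∧
    ¬ ∃ C : ℝ, ∀ u₀ : TrigPoly1,
        (⨆ t : Set.Icc (0:ℝ) 1, HsNorm s (u3 u₀ t)) ≤ C * HsNorm s u₀ := by
  have h2spos : (0:ℝ) < (2:ℝ)^s := Real.rpow_pos_of_pos (by norm_num) s
  constructor
  · exact ⟨2, by norm_num, (2:ℝ)^s, h2spos,
      fun m hm => u0m_norm_le s hs m hm,
      5, fun m hm => sup_lower s hs m hm⟩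
  · rintro ⟨C, hC⟩
    have hchain : ∀ m : ℕ, 5 ≤ m →
        (2:ℝ)^s * (m : ℝ) ^ (-(2 * s)) ≤ C * HsNorm s (u0m s m) :=
      fun m hm => le_trans (sup_lower s hs m hm) (hC (u0m s m))
    by_cases hCpos : 0 < C
    · have hbound : ∀ m : ℕ, 5 ≤ m → (m : ℝ) ^ (-(2 * s)) ≤ 2*C/(2:ℝ)^s := by
        intro m hm
        have h1 := hchain m hm
        have h2 : HsNorm s (u0m s m) ≤ 2 := u0m_norm_le s hs m (by omega)
        have h3 : C * HsNorm s (u0m s m) ≤ 2*C := by nlinarith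
        rw [le_div_iff₀ h2spos]
        nlinarith
      have htend : Filter.Tendsto (fun m : ℕ => (m:ℝ)^(-(2*s))) Filter.atTop Filter.atTop :=
        (tendsto_rpow_atTop (by linarith)).comp tendsto_natCast_atTop_atTop
      have hev := (htend.eventually_gt_atTop (2*C/(2:ℝ)^s)).and (Filter.eventually_ge_atTop 5)
      obtain ⟨m, h1, h2⟩ := hev.exists
      exact absurd (hbound m h2) (not_le.2 h1)
    · push_neg at hCpos
      have h1 := hchain 5 (le_refl 5)
      have h2 : C * HsNorm s (u0m s 5) ≤ 0 :=
        mul_nonpos_of_nonpos_of_nonneg hCpos (HsNorm_nonneg s _)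
      have h3 : (0:ℝ) < ((5:ℕ) : ℝ) ^ (-(2 * s)) :=
        Real.rpow_pos_of_pos (by norm_num) _
      nlinarith

theorem stmt19 (s : ℝ) (hs : s < 0) :
    (∃ C₀ : ℝ, 0 < C₀ ∧ ∃ c : ℝ, 0 < c ∧
      (∀ m : ℕ, 2 ≤ m → HsNorm s (u0m s m) ≤ C₀) ∧
      ∃ M : ℕ, ∀ m : ℕ, M ≤ m →
        c * (m : ℝ) ^ (-(2 * s)) ≤ ⨆ t : Set.Icc (0:ℝ) 1, HsNorm s (u3 (u0m s m) t)) ∧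
    ¬ ∃ C : ℝ, ∀ u₀ : TrigPoly1,
        (⨆ t : Set.Icc (0:ℝ) 1, HsNorm s (u3 u₀ t)) ≤ C * HsNorm s u₀ := by
  exact stmt19' s hs
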